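/- arXiv:2009.06571 — 9 statements merged into one kernel-verified Lean document; each statement's English description precedes it below -/
import Mathlib

section
/- Let p ∈ [1,∞], let E be ℝ^d equipped with the ℓ^p norm, let f : E → ℝ be twice continuously differentiable, let x ∈ E with f(x) > 0, and let R > 0. If δ ∈ E satisfies f(x+δ) ≤ 0, then ‖δ‖_p ≥ min{ R, f(x) / ( ‖f′(x)‖ + (R/2)·K_R(f,x) ) }, where ‖f′(x)‖ is the operator norm of the Fréchet derivative of f at x (as a continuous linear functional on E) and K_R(f,x) := sup_{‖γ‖_p ≤ R} ‖f″(x+γ)‖. -/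
open scoped ENNReal

/-- Fixed-`R` form of Theorem 2: if `f x > 0` and `f (x + δ) ≤ 0`, then
`‖δ‖ₚ ≥ min { R, f x / (‖f′(x)‖ + (R/2)·K_R(f,x)) }`, where
`K_R(f,x) = sup_{‖γ‖ₚ ≤ R} ‖f″(x+γ)‖`. -/
theorem hessian_robustness_fixedR
    (d : ℕ) (hd : 1 ≤ d) (p : ℝ≥0∞) [Fact (1 ≤ p)]
    (f : PiLp p (fun _ : Fin d => ℝ) → ℝ) (hf : ContDiff ℝ 2 f)
    (x : PiLp p (fun _ : Fin d => ℝ)) (hx : 0 < f x)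
    (R : ℝ) (hR : 0 < R)
    (δ : PiLp p (fun _ : Fin d => ℝ)) (hδ : f (x + δ) ≤ 0) :
    min R (f x / (‖fderiv ℝ f x‖ +
      R / 2 * sSup ((fun γ => ‖fderiv ℝ (fderiv ℝ f) (x + γ)‖) ''
        Metric.closedBall 0 R))) ≤ ‖δ‖ := by
  by_cases hcase : R ≤ ‖δ‖
  · exact le_trans (min_le_left _ _) hcase
  push_neg at hcase
  -- notation
  set K : ℝ := sSup ((fun γ => ‖fderiv ℝ (fderiv ℝ f) (x + γ)‖) ''
      Metric.closedBall 0 R) with hK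
  have hf1 : ContDiff ℝ 1 (fderiv ℝ f) := (contDiff_succ_iff_fderiv.mp hf).2.2
  have hfd : Differentiable ℝ f := hf.differentiable two_ne_zero
  have hfd1 : Differentiable ℝ (fderiv ℝ f) := hf1.differentiable one_ne_zero
  -- boundedness of the sup set
  have hKbdd : BddAbove ((fun γ => ‖fderiv ℝ (fderiv ℝ f) (x + γ)‖) ''
      Metric.closedBall 0 R) := by
    have hcont : Continuous fun γ : PiLp p (fun _ : Fin d => ℝ) => ‖fderiv ℝ (fderiv ℝ f) (x + γ)‖ :=
      (((hf1.fderiv_right (m := 0) le_rfl).continuous).comp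
        (continuous_const.add continuous_id)).norm
    exact ((isCompact_closedBall (0 : PiLp p (fun _ : Fin d => ℝ)) R).image hcont).bddAbove
  have hK0 : 0 ≤ K := by
    have : ‖fderiv ℝ (fderiv ℝ f) (x + 0)‖ ≤ K :=
      le_csSup hKbdd ⟨0, Metric.mem_closedBall_self hR.le, rfl⟩
    exact le_trans (norm_nonneg (fderiv ℝ (fderiv ℝ f) (x + 0))) this
  have hKmem : ∀ γ : PiLp p (fun _ : Fin d => ℝ), ‖γ‖ ≤ R → ‖fderiv ℝ (fderiv ℝ f) (x + γ)‖ ≤ K := fun γ hγ =>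
    le_csSup hKbdd ⟨γ, by simpa [Metric.mem_closedBall, dist_eq_norm] using hγ, rfl⟩
  -- the curve
  set c : ℝ → PiLp p (fun _ : Fin d => ℝ) := fun t => x + t • δ with hc
  have hcderiv : ∀ t : ℝ, HasDerivAt c δ t := by
    intro t
    rw [hc]; simpa using ((hasDerivAt_id t).smul_const δ).const_add x
  set g : ℝ → ℝ := fun t => f (c t) with hg
  have hg' : ∀ t : ℝ, HasDerivAt g (fderiv ℝ f (c t) δ) t := fun t =>
    ((hfd (c t)).hasFDerivAt).comp_hasDerivAt t (hcderiv t)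
  have hgderiv : deriv g = fun t => fderiv ℝ f (c t) δ :=
    funext fun t => (hg' t).deriv
  have hg'' : ∀ t : ℝ, HasDerivAt (fun t => fderiv ℝ f (c t) δ)
      (fderiv ℝ (fderiv ℝ f) (c t) δ δ) t := by
    intro t
    have h1 : HasDerivAt (fun t => fderiv ℝ f (c t)) (fderiv ℝ (fderiv ℝ f) (c t) δ) t :=
      ((hfd1 (c t)).hasFDerivAt).comp_hasDerivAt t (hcderiv t)
    exact h1.clm_apply (hasDerivAt_const t δ) |>.congr_deriv (by simp)
  -- g is C²
  have hgC2 : ContDiff ℝ 2 g := hf.comp (contDiff_const.add (contDiff_id.smul contDiff_const))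
  set s : Set ℝ := Set.Icc (0 : ℝ) 1 with hs
  have hsu : UniqueDiffOn ℝ s := uniqueDiffOn_Icc one_pos
  -- Taylor with Lagrange remainder, n = 1
  have hdiff1 : DifferentiableOn ℝ (iteratedDerivWithin 1 g s) (Set.Ioo (0:ℝ) 1) := by
    apply DifferentiableOn.congr (f := deriv g)
    · intro t ht
      exact ((hg'' t).differentiableAt.congr_of_eventuallyEq
        (by filter_upwards with u; rw [hgderiv])).differentiableWithinAt
    · intro t ht
      rw [iteratedDerivWithin_one,
        (hg' t).differentiableAt.derivWithin (hsu t (Set.mem_Icc_of_Ioo ht)), (hg' t).deriv]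
  obtain ⟨ξ, hξ, htaylor⟩ := taylor_mean_remainder_lagrange (f := g) (n := 1)
    (x₀ := 0) (x := 1) zero_ne_one (hgC2.contDiffOn.of_le one_le_two)
    (by rw [Set.uIcc_of_le zero_le_one, Set.uIoo_of_le zero_le_one]; exact hdiff1)
  rw [Set.uIcc_of_le zero_le_one, ← hs] at htaylor
  rw [Set.uIoo_of_le zero_le_one] at hξ
  -- simplify the Taylor polynomial and the remainder
  have hT : taylorWithinEval g 1 s 0 1 = g 0 + fderiv ℝ f x δ := by
    rw [taylorWithinEval_succ, taylor_within_zero_eval,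
      iteratedDerivWithin_one,
      (hg' 0).differentiableAt.derivWithin (hsu 0 (by norm_num [hs])), (hg' 0).deriv]
    simp [hc]
  have hrem : iteratedDerivWithin 2 g s ξ = fderiv ℝ (fderiv ℝ f) (c ξ) δ δ := by
    have hξs : ξ ∈ s := Set.mem_Icc_of_Ioo hξ
    rw [show (2:ℕ) = 1 + 1 from rfl, iteratedDerivWithin_succ]
    have heq : Set.EqOn (iteratedDerivWithin 1 g s) (deriv g) s := by
      intro t ht
      rw [iteratedDerivWithin_one,
        (hg' t).differentiableAt.derivWithin (hsu t ht)]
    rw [derivWithin_congr heq (heq hξs),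
      ((hg'' ξ).congr_deriv rfl |>.congr_of_eventuallyEq
        (by filter_upwards with u; rw [hgderiv])).differentiableAt.derivWithin (hsu ξ hξs)]
    have : deriv (deriv g) ξ = fderiv ℝ (fderiv ℝ f) (c ξ) δ δ := by
      rw [hgderiv]; exact (hg'' ξ).deriv
    exact this
  -- assemble the key inequality
  have hδR : ‖δ‖ ≤ R := hcase.le
  have hξδ : ‖ξ • δ‖ ≤ R := by
    rw [norm_smul, Real.norm_eq_abs, abs_of_pos hξ.1]
    calc ξ * ‖δ‖ ≤ 1 * ‖δ‖ := by
          exact mul_le_mul_of_nonneg_right hξ.2.le (norm_nonneg _)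
      _ ≤ R := by simpa using hδR
  have hHess : |fderiv ℝ (fderiv ℝ f) (c ξ) δ δ| ≤ K * ‖δ‖ ^ 2 := by
    calc |fderiv ℝ (fderiv ℝ f) (c ξ) δ δ|
        ≤ ‖fderiv ℝ (fderiv ℝ f) (c ξ)‖ * ‖δ‖ * ‖δ‖ := by
          rw [← Real.norm_eq_abs]
          exact ContinuousLinearMap.le_opNorm₂ _ δ δ
      _ ≤ K * ‖δ‖ * ‖δ‖ := by
          refine mul_le_mul_of_nonneg_right (mul_le_mul_of_nonneg_right ?_ (norm_nonneg _))
            (norm_nonneg _)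
          exact hKmem (ξ • δ) hξδ
      _ = K * ‖δ‖ ^ 2 := by ring
  have hgrad : |fderiv ℝ f x δ| ≤ ‖fderiv ℝ f x‖ * ‖δ‖ :=
    (fderiv ℝ f x).le_opNorm δ
  -- f x ≤ ‖f′x‖‖δ‖ + K/2 ‖δ‖²
  have hg0 : g 0 = f x := by simp [hg, hc]
  have hg1 : g 1 = f (x + δ) := by simp [hg, hc]
  have hmain : f x ≤ ‖fderiv ℝ f x‖ * ‖δ‖ + K / 2 * ‖δ‖ ^ 2 := by
    rw [hT, hrem] at htaylor
    have hfx : f x = g 1 - fderiv ℝ f x δ - fderiv ℝ (fderiv ℝ f) (c ξ) δ δ / 2 := by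
      rw [← hg0]; norm_num [Nat.factorial] at htaylor; linarith [htaylor]
    rw [hfx, hg1]
    have h1 : -fderiv ℝ f x δ ≤ ‖fderiv ℝ f x‖ * ‖δ‖ := by
      have := neg_abs_le (fderiv ℝ f x δ); linarith
    have h2 : -(fderiv ℝ (fderiv ℝ f) (c ξ) δ δ / 2) ≤ K / 2 * ‖δ‖ ^ 2 := by
      have := neg_abs_le (fderiv ℝ (fderiv ℝ f) (c ξ) δ δ); linarith
    linarith
  have hmain2 : f x ≤ (‖fderiv ℝ f x‖ + R / 2 * K) * ‖δ‖ := by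
    have h1 : K * ‖δ‖ * ‖δ‖ ≤ K * R * ‖δ‖ :=
      mul_le_mul_of_nonneg_right (mul_le_mul_of_nonneg_left hδR hK0) (norm_nonneg _)
    have h2 : K / 2 * ‖δ‖ ^ 2 = K * ‖δ‖ * ‖δ‖ / 2 := by ring
    have h3 : (‖fderiv ℝ f x‖ + R / 2 * K) * ‖δ‖ =
        ‖fderiv ℝ f x‖ * ‖δ‖ + K * R * ‖δ‖ / 2 := by ring
    linarith
  have hD : 0 < ‖fderiv ℝ f x‖ + R / 2 * K := by
    by_contra hcon
    push_neg at hcon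
    have := mul_nonpos_of_nonpos_of_nonneg hcon (norm_nonneg δ)
    linarith
  refine le_trans (min_le_right _ _) ?_
  rw [div_le_iff₀ hD]
  linarith [hmain2]
end

section
/- Let p ∈ [1,∞], let E be ℝ^d equipped with the ℓ^p norm, let f : E → ℝ be twice continuously differentiable, and let x ∈ E with f(x) > 0. If δ ∈ E satisfies f(x+δ) ≤ 0, then ‖δ‖_p ≥ sup_{R > 0} min{ R, f(x) / ( ‖f′(x)‖ + (R/2)·K_R(f,x) ) }, where ‖f′(x)‖ is the operator norm of the Fréchet derivative of f at x and K_R(f,x) := sup_{‖γ‖_p ≤ R} ‖f″(x+γ)‖. -/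
open scoped ENNReal
open Set

section aux
variable {d : ℕ} {p : ℝ≥0∞} [Fact (1 ≤ p)]
local notation "E" => PiLp p (fun _ : Fin d => ℝ)

lemma line_hasDerivAt (f : E → ℝ) (hf : ContDiff ℝ 2 f) (x δ : E) (t : ℝ) :
    HasDerivAt (fun t : ℝ => f (x + t • δ)) ((fderiv ℝ f (x + t • δ)) δ) t := by
  have hline : HasDerivAt (fun t : ℝ => x + t • δ) δ t := by
    simpa using ((hasDerivAt_id t).smul_const δ).const_add x
  exact ((hf.differentiable two_ne_zero _).hasFDerivAt).comp_hasDerivAt t hline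

lemma line_hasDerivAt2 (f : E → ℝ) (hf : ContDiff ℝ 2 f) (x δ : E) (t : ℝ) :
    HasDerivAt (fun t : ℝ => (fderiv ℝ f (x + t • δ)) δ)
      ((fderiv ℝ (fderiv ℝ f) (x + t • δ)) δ δ) t := by
  have hline : HasDerivAt (fun t : ℝ => x + t • δ) δ t := by
    simpa using ((hasDerivAt_id t).smul_const δ).const_add x
  have hF : Differentiable ℝ (fderiv ℝ f) :=
    (hf.fderiv_right (m := 1) (by norm_num)).differentiable one_ne_zero
  have h1 : HasDerivAt (fun t : ℝ => fderiv ℝ f (x + t • δ))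
      ((fderiv ℝ (fderiv ℝ f) (x + t • δ)) δ) t :=
    ((hF _).hasFDerivAt).comp_hasDerivAt t hline
  simpa using h1.clm_apply (hasDerivAt_const t δ)

/-- Second-order Taylor bound along a segment. -/
lemma taylor_ineq (f : E → ℝ) (hf : ContDiff ℝ 2 f) (x δ : E) :
    ∃ c ∈ Ioo (0:ℝ) 1, f (x + δ) =
      f x + fderiv ℝ f x δ + (fderiv ℝ (fderiv ℝ f) (x + c • δ)) δ δ / 2 := by
  set g : ℝ → ℝ := fun t => f (x + t • δ) with hg
  have hgC : ContDiff ℝ 2 g := by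
    apply hf.comp
    exact contDiff_const.add (contDiff_id.smul contDiff_const)
  have hud : UniqueDiffOn ℝ (Icc (0:ℝ) 1) := uniqueDiffOn_Icc one_pos
  have hder1 : ∀ t : ℝ, deriv g t = (fderiv ℝ f (x + t • δ)) δ := fun t =>
    (line_hasDerivAt f hf x δ t).deriv
  have hiter1 : ∀ t ∈ Icc (0:ℝ) 1,
      iteratedDerivWithin 1 g (Icc (0:ℝ) 1) t = (fderiv ℝ f (x + t • δ)) δ := by
    intro t ht
    rw [iteratedDerivWithin_one,
      (line_hasDerivAt f hf x δ t).differentiableAt.derivWithin (hud t ht)]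
    exact hder1 t
  have hI : uIcc (0:ℝ) 1 = Icc 0 1 := uIcc_of_le zero_le_one
  have hIoo : uIoo (0:ℝ) 1 = Ioo 0 1 := uIoo_of_le zero_le_one
  obtain ⟨c, hc, hcf⟩ := taylor_mean_remainder_lagrange (n := 1) (f := g) (x₀ := 0) (x := 1)
    zero_ne_one
    (by rw [hI]; exact (hgC.of_le one_le_two).contDiffOn)
    (by
      rw [hI, hIoo]
      have hd2 : Differentiable ℝ (fun t : ℝ => (fderiv ℝ f (x + t • δ)) δ) :=
        fun t => (line_hasDerivAt2 f hf x δ t).differentiableAt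
      exact hd2.differentiableOn.congr fun t ht => hiter1 t (Ioo_subset_Icc_self ht))
  rw [hI] at hcf
  rw [hIoo] at hc
  refine ⟨c, hc, ?_⟩
  have h2 : iteratedDerivWithin 2 g (Icc (0:ℝ) 1) c
      = (fderiv ℝ (fderiv ℝ f) (x + c • δ)) δ δ := by
    have hmem : Icc (0:ℝ) 1 ∈ nhds c := Icc_mem_nhds hc.1 hc.2
    have : iteratedDerivWithin 2 g (Icc (0:ℝ) 1) c
        = derivWithin (iteratedDerivWithin 1 g (Icc (0:ℝ) 1)) (Icc (0:ℝ) 1) c :=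
      by rw [iteratedDerivWithin_succ]
    rw [this, derivWithin_of_mem_nhds hmem]
    have heq : (fun t => iteratedDerivWithin 1 g (Icc (0:ℝ) 1) t)
        =ᶠ[nhds c] (fun t => (fderiv ℝ f (x + t • δ)) δ) := by
      filter_upwards [hmem] with t ht using hiter1 t ht
    rw [Filter.EventuallyEq.deriv_eq heq]
    exact (line_hasDerivAt2 f hf x δ c).deriv
  have htay : taylorWithinEval g 1 (Icc (0:ℝ) 1) 0 1 = g 0 + (fderiv ℝ f x) δ := by
    rw [taylor_within_apply]
    have h0 : iteratedDerivWithin 1 g (Icc (0:ℝ) 1) 0 = (fderiv ℝ f x) δ := by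
      simpa using hiter1 0 (by norm_num)
    simp [Finset.sum_range_succ, h0]
  rw [htay, h2] at hcf
  have : g 1 = f (x + δ) := by simp [hg]
  have hg0 : g 0 = f x := by simp [hg]
  rw [this, hg0] at hcf
  norm_num [Nat.factorial] at hcf
  linarith

end aux

/-- Theorem 2: if `f x > 0` and `f (x + δ) ≤ 0`, then
`‖δ‖ₚ ≥ sup_{R > 0} min { R, f x / (‖f′(x)‖ + (R/2)·K_R(f,x)) }`, where
`K_R(f,x) = sup_{‖γ‖ₚ ≤ R} ‖f″(x+γ)‖`. -/
theorem hessian_robustness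
    (d : ℕ) (hd : 1 ≤ d) (p : ℝ≥0∞) [Fact (1 ≤ p)]
    (f : PiLp p (fun _ : Fin d => ℝ) → ℝ) (hf : ContDiff ℝ 2 f)
    (x : PiLp p (fun _ : Fin d => ℝ)) (hx : 0 < f x)
    (δ : PiLp p (fun _ : Fin d => ℝ)) (hδ : f (x + δ) ≤ 0) :
    sSup {m : ℝ | ∃ R > (0 : ℝ), m = min R (f x / (‖fderiv ℝ f x‖ +
      R / 2 * sSup ((fun γ => ‖fderiv ℝ (fderiv ℝ f) (x + γ)‖) ''
        Metric.closedBall 0 R)))} ≤ ‖δ‖ := by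
  apply Real.sSup_le _ (norm_nonneg δ)
  rintro m ⟨R, hR, rfl⟩
  rcases le_or_gt R ‖δ‖ with h | h
  · exact (min_le_left _ _).trans h
  set K := sSup ((fun γ => ‖fderiv ℝ (fderiv ℝ f) (x + γ)‖) ''
      Metric.closedBall 0 R) with hK
  have hK0 : 0 ≤ K := Real.sSup_nonneg (s := (fun γ => ‖fderiv ℝ (fderiv ℝ f) (x + γ)‖) ''
      Metric.closedBall (0 : PiLp p (fun _ : Fin d => ℝ)) R) (by rintro y ⟨γ, -, rfl⟩; exact norm_nonneg (fderiv ℝ (fderiv ℝ f) (x + γ)))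
  have hbdd : BddAbove ((fun γ => ‖fderiv ℝ (fderiv ℝ f) (x + γ)‖) ''
      Metric.closedBall 0 R) := by
    apply IsCompact.bddAbove
    apply (isCompact_closedBall (0 : PiLp p (fun _ : Fin d => ℝ)) R).image
    exact (continuous_norm.comp ((hf.fderiv_right (m := 1) (by norm_num)).continuous_fderiv one_ne_zero)).comp
      (continuous_const.add continuous_id)
  obtain ⟨c, hc, hcf⟩ := taylor_ineq f hf x δ
  -- bound the second-order term
  have hcball : c • δ ∈ Metric.closedBall (0 : PiLp p (fun _ : Fin d => ℝ)) R := by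
    rw [Metric.mem_closedBall, dist_zero_right, norm_smul]
    calc ‖c‖ * ‖δ‖ ≤ 1 * ‖δ‖ := by
          apply mul_le_mul_of_nonneg_right _ (norm_nonneg δ)
          rw [Real.norm_eq_abs, abs_of_pos hc.1]; exact hc.2.le
      _ ≤ R := by simpa using h.le
  have hKle : ‖fderiv ℝ (fderiv ℝ f) (x + c • δ)‖ ≤ K :=
    le_csSup hbdd ⟨c • δ, hcball, rfl⟩
  have h2bound : |(fderiv ℝ (fderiv ℝ f) (x + c • δ)) δ δ| ≤ K * ‖δ‖ * ‖δ‖ := by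
    calc |(fderiv ℝ (fderiv ℝ f) (x + c • δ)) δ δ|
        ≤ ‖fderiv ℝ (fderiv ℝ f) (x + c • δ)‖ * ‖δ‖ * ‖δ‖ := by
          simpa using ((fderiv ℝ (fderiv ℝ f) (x + c • δ)).le_opNorm₂ δ δ)
      _ ≤ K * ‖δ‖ * ‖δ‖ := by
          gcongr
  have h1bound : |(fderiv ℝ f x) δ| ≤ ‖fderiv ℝ f x‖ * ‖δ‖ := by
    simpa using (fderiv ℝ f x).le_opNorm δ
  set D := ‖fderiv ℝ f x‖ + R / 2 * K with hD
  have hfxle : f x ≤ D * ‖δ‖ := by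
    have : f x ≤ ‖fderiv ℝ f x‖ * ‖δ‖ + K * ‖δ‖ * ‖δ‖ / 2 := by
      have := abs_le.mp h1bound
      have := abs_le.mp h2bound
      linarith [hδ, hcf]
    calc f x ≤ ‖fderiv ℝ f x‖ * ‖δ‖ + K * ‖δ‖ * ‖δ‖ / 2 := this
      _ ≤ ‖fderiv ℝ f x‖ * ‖δ‖ + K * R * ‖δ‖ / 2 := by
          have : K * ‖δ‖ * ‖δ‖ ≤ K * R * ‖δ‖ := by
            apply mul_le_mul_of_nonneg_right _ (norm_nonneg δ)
            exact mul_le_mul_of_nonneg_left h.le hK0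
          linarith
      _ = D * ‖δ‖ := by ring
  have hD0 : 0 < D := by
    rcases le_or_gt D 0 with hD0 | hD0
    · exfalso
      have : D * ‖δ‖ ≤ 0 := mul_nonpos_of_nonpos_of_nonneg hD0 (norm_nonneg δ)
      linarith
    · exact hD0
  refine (min_le_right _ _).trans ?_
  rw [div_le_iff₀ hD0]
  linarith [hfxle]
end

section
/- Let p ∈ [1,∞], let E be ℝ^d equipped with the ℓ^p norm, let f : E → ℝ be continuously differentiable, let x ∈ E with f(x) > 0, and let R > 0 be such that sup_{‖γ‖_p ≤ R} ‖f′(x+γ)‖ > 0. If δ ∈ E satisfies f(x+δ) ≤ 0, then ‖δ‖_p ≥ min{ R, f(x) / sup_{‖γ‖_p ≤ R} ‖f′(x+γ)‖ }, where ‖f′(y)‖ denotes the operator norm of the Fréchet derivative of f at y (as a continuous linear functional on E). -/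
open scoped ENNReal

/-- Fixed-`R` form of Theorem 1 (Hein–Andriushchenko): if `f x > 0`,
`G_R := sup_{‖γ‖ₚ ≤ R} ‖f′(x+γ)‖ > 0` and `f (x + δ) ≤ 0`, then
`‖δ‖ₚ ≥ min { R, f x / G_R }`. -/
theorem gradient_robustness_fixedR
    (d : ℕ) (hd : 1 ≤ d) (p : ℝ≥0∞) [Fact (1 ≤ p)]
    (f : PiLp p (fun _ : Fin d => ℝ) → ℝ) (hf : ContDiff ℝ 1 f)
    (x : PiLp p (fun _ : Fin d => ℝ)) (hx : 0 < f x)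
    (R : ℝ) (hR : 0 < R)
    (hG : 0 < sSup ((fun γ => ‖fderiv ℝ f (x + γ)‖) '' Metric.closedBall 0 R))
    (δ : PiLp p (fun _ : Fin d => ℝ)) (hδ : f (x + δ) ≤ 0) :
    min R (f x / sSup ((fun γ => ‖fderiv ℝ f (x + γ)‖) '' Metric.closedBall 0 R))
      ≤ ‖δ‖ := by
  set G := sSup ((fun γ => ‖fderiv ℝ f (x + γ)‖) '' Metric.closedBall 0 R) with hGdef
  by_contra h
  push_neg at h
  obtain ⟨hδR, hδG⟩ := lt_min_iff.mp h
  have hcont : Continuous fun γ => ‖fderiv ℝ f (x + γ)‖ :=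
    ((hf.continuous_fderiv one_ne_zero).comp (continuous_const.add continuous_id)).norm
  have hbdd : BddAbove ((fun γ => ‖fderiv ℝ f (x + γ)‖) '' Metric.closedBall 0 R) :=
    ((isCompact_closedBall (0 : PiLp p (fun _ : Fin d => ℝ)) R).image hcont).bddAbove
  have hbound : ∀ y ∈ Metric.closedBall x R, ‖fderiv ℝ f y‖ ≤ G := by
    intro y hy
    have : y - x ∈ Metric.closedBall (0 : PiLp p (fun _ : Fin d => ℝ)) R := by
      simpa [Metric.mem_closedBall, dist_eq_norm] using Metric.mem_closedBall.mp hy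
    exact le_csSup hbdd ⟨y - x, this, by simp⟩
  have hmem : x + δ ∈ Metric.closedBall x R := by
    simp [Metric.mem_closedBall, dist_eq_norm]
    exact le_of_lt (by simpa using hδR)
  have hxm : x ∈ Metric.closedBall x R := Metric.mem_closedBall_self hR.le
  have hlip : ‖f (x + δ) - f x‖ ≤ G * ‖(x + δ) - x‖ :=
    (convex_closedBall x R).norm_image_sub_le_of_norm_fderiv_le
      (fun y _ => (hf.differentiable one_ne_zero) y) hbound hxm hmem
  have h1 : f x ≤ G * ‖δ‖ := by
    have : f x - f (x + δ) ≤ ‖f (x + δ) - f x‖ := by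
      rw [norm_sub_rev]
      exact le_abs_self _
    have h2 : f x - f (x + δ) ≤ G * ‖δ‖ := by
      simpa using this.trans hlip
    linarith
  have : G * ‖δ‖ < f x := by have := (lt_div_iff₀ hG).mp hδG; linarith
  linarith
end

section
/- Let p ∈ [1,∞], let E be ℝ^d equipped with the ℓ^p norm, let f : E → ℝ be continuously differentiable, and let x ∈ E with f(x) > 0. If δ ∈ E satisfies f(x+δ) ≤ 0, then ‖δ‖_p ≥ sup_{R > 0, with sup_{‖γ‖_p ≤ R} ‖f′(x+γ)‖ > 0} min{ R, f(x) / sup_{‖γ‖_p ≤ R} ‖f′(x+γ)‖ }, where ‖f′(y)‖ denotes the operator norm of the Fréchet derivative of f at y. -/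
open scoped ENNReal

/-- Theorem 1 (Hein–Andriushchenko): if `f x > 0` and `f (x + δ) ≤ 0`, then
`‖δ‖ₚ ≥ sup_{R > 0, G_R > 0} min { R, f x / G_R }` where
`G_R := sup_{‖γ‖ₚ ≤ R} ‖f′(x+γ)‖`. -/
theorem gradient_robustness
    (d : ℕ) (hd : 1 ≤ d) (p : ℝ≥0∞) [Fact (1 ≤ p)]
    (f : PiLp p (fun _ : Fin d => ℝ) → ℝ) (hf : ContDiff ℝ 1 f)
    (x : PiLp p (fun _ : Fin d => ℝ)) (hx : 0 < f x)
    (δ : PiLp p (fun _ : Fin d => ℝ)) (hδ : f (x + δ) ≤ 0) :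
    sSup {m : ℝ | ∃ R > (0 : ℝ),
      0 < sSup ((fun γ => ‖fderiv ℝ f (x + γ)‖) '' Metric.closedBall 0 R) ∧
      m = min R (f x /
        sSup ((fun γ => ‖fderiv ℝ f (x + γ)‖) '' Metric.closedBall 0 R))} ≤ ‖δ‖ := by
  apply Real.sSup_le _ (norm_nonneg δ)
  rintro m ⟨R, hR, hG, rfl⟩
  set g : PiLp p (fun _ : Fin d => ℝ) → ℝ := fun γ => ‖fderiv ℝ f (x + γ)‖ with hg
  by_cases h : R ≤ ‖δ‖
  · exact le_trans (min_le_left _ _) h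
  push_neg at h
  refine le_trans (min_le_right _ _) ?_
  set G := sSup (g '' Metric.closedBall 0 R) with hGdef
  rw [div_le_iff₀ hG]
  -- bound on derivative norm on the ball
  have hcont : Continuous g :=
    ((hf.continuous_fderiv one_ne_zero).comp (continuous_const.add continuous_id)).norm
  have hbdd : BddAbove (g '' Metric.closedBall 0 R) :=
    ((isCompact_closedBall (0 : PiLp p (fun _ : Fin d => ℝ)) R).image hcont).bddAbove
  have hbound : ∀ y ∈ Metric.closedBall x R, ‖fderiv ℝ f y‖ ≤ G := by
    intro y hy
    have hmem : y - x ∈ Metric.closedBall (0 : PiLp p (fun _ : Fin d => ℝ)) R := by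
      rw [Metric.mem_closedBall, dist_zero_right]
      rw [Metric.mem_closedBall, dist_eq_norm] at hy
      exact hy
    have : g (y - x) ≤ G := le_csSup hbdd ⟨y - x, hmem, rfl⟩
    simpa [hg] using this
  have hdiff : ∀ y ∈ Metric.closedBall x R, DifferentiableAt ℝ f y := fun y _ =>
    (hf.differentiable one_ne_zero) y
  have hxmem : x ∈ Metric.closedBall x R := Metric.mem_closedBall_self hR.le
  have hxδ : x + δ ∈ Metric.closedBall x R := by
    rw [Metric.mem_closedBall, dist_eq_norm]
    simpa using h.le
  have key : ‖f (x + δ) - f x‖ ≤ G * ‖x + δ - x‖ :=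
    (convex_closedBall x R).norm_image_sub_le_of_norm_fderiv_le hdiff hbound hxmem hxδ
  have h1 : f x ≤ ‖f (x + δ) - f x‖ := by
    rw [Real.norm_eq_abs, abs_sub_comm]
    calc f x = f x - 0 := by ring
    _ ≤ f x - f (x + δ) := by linarith
    _ ≤ |f x - f (x + δ)| := le_abs_self _
  have h2 : ‖x + δ - x‖ = ‖δ‖ := by simp
  calc f x ≤ G * ‖x + δ - x‖ := le_trans h1 key
  _ = ‖δ‖ * G := by rw [h2]; ring
end

section
/- Let p ∈ [1,∞], let E be ℝ^d equipped with the ℓ^p norm, let K ≥ 2, and let f : E → ℝ^K have twice continuously differentiable components f₁,…,f_K : E → ℝ. Fix x ∈ E and an index t such that f_t(x) > f_j(x) for all j ≠ t, and for j ≠ t set f^{(j)} := f_t − f_j. If δ ∈ E satisfies max_{j ≠ t} f_j(x+δ) > f_t(x+δ), then ‖δ‖_p ≥ sup_{R > 0} min{ R, min_{j ≠ t} f^{(j)}(x) / ( ‖(f^{(j)})′(x)‖ + (R/2)·K_R(f^{(j)},x) ) }, where K_R(g,x) := sup_{‖γ‖_p ≤ R} ‖g″(x+γ)‖. -/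
open scoped ENNReal


/-- Second-order Taylor lower bound in 1D. -/
lemma taylor_lower_aux {h h' h'' : ℝ → ℝ} {C : ℝ}
    (hd1 : ∀ s, HasDerivAt h (h' s) s)
    (hd2 : ∀ s, HasDerivAt h' (h'' s) s)
    (hC : ∀ s ∈ Set.Icc (0:ℝ) 1, |h'' s| ≤ C) :
    h 0 + h' 0 - C / 2 ≤ h 1 := by
  have hC0 : 0 ≤ C := le_trans (abs_nonneg _) (hC 0 (by norm_num))
  set ψ : ℝ → ℝ := fun s => h s - s * h' 0 + C / 2 * s ^ 2 with hψdef
  have hψ : ∀ s, HasDerivAt ψ (h' s - h' 0 + C * s) s := by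
    intro s
    have h1 : HasDerivAt (fun s : ℝ => s * h' 0) (h' 0) s := by
      simpa using (hasDerivAt_id s).mul_const (h' 0)
    have h2 : HasDerivAt (fun s : ℝ => C / 2 * s ^ 2) (C / 2 * (((2:ℕ):ℝ) * s ^ 1)) s :=
      (hasDerivAt_pow 2 s).const_mul (C / 2)
    have := ((hd1 s).sub h1).add h2
    refine HasDerivAt.congr_deriv this ?_
    push_cast; ring
  have hmono : MonotoneOn ψ (Set.Icc 0 1) := by
    apply monotoneOn_of_deriv_nonneg (convex_Icc 0 1)
      (fun s _ => (hψ s).continuousAt.continuousWithinAt)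
      (fun s hs => (hψ s).differentiableAt.differentiableWithinAt)
    intro s hs
    rw [interior_Icc] at hs
    rw [(hψ s).deriv]
    have habs : |h' s - h' 0| ≤ C * s := by
      have hb := norm_image_sub_le_of_norm_deriv_le_segment'
        (f := h') (f' := h'') (a := (0:ℝ)) (b := s)
        (fun y _ => (hd2 y).hasDerivWithinAt)
        (fun y hy => by
          rw [Real.norm_eq_abs]
          exact hC y ⟨hy.1, le_trans hy.2.le hs.2.le⟩)
        s (Set.right_mem_Icc.2 hs.1.le)
      rw [Real.norm_eq_abs] at hb
      simpa using hb
    have := (abs_le.mp habs).1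
    linarith
  have h01 : ψ 0 ≤ ψ 1 := hmono (by norm_num) (by norm_num) (by norm_num)
  simp only [hψdef] at h01
  norm_num at h01
  linarith

/-- Key quantitative lemma. -/
lemma key_lemma {E : Type*} [NormedAddCommGroup E] [NormedSpace ℝ E]
    [FiniteDimensional ℝ E]
    (g : E → ℝ) (hg : ContDiff ℝ 2 g) (x δ : E) (R : ℝ) (hR : 0 < R)
    (hδR : ‖δ‖ ≤ R) (hgx : 0 < g x) (hgxδ : g (x + δ) < 0) :
    g x / (‖fderiv ℝ g x‖ +
      R / 2 * sSup ((fun γ => ‖fderiv ℝ (fderiv ℝ g) (x + γ)‖) ''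
        Metric.closedBall 0 R)) ≤ ‖δ‖ := by
  have hg1 : ContDiff ℝ 1 (fderiv ℝ g) := hg.fderiv_right (by norm_num)
  have hgd : Differentiable ℝ g := hg.differentiable (by norm_num)
  have hFd : Differentiable ℝ (fderiv ℝ g) := hg1.differentiable (by norm_num)
  have hcont : Continuous fun y => fderiv ℝ (fderiv ℝ g) y := hg1.continuous_fderiv (by norm_num)
  set Kc : ℝ := sSup ((fun γ => ‖fderiv ℝ (fderiv ℝ g) (x + γ)‖) ''
      Metric.closedBall 0 R) with hKc
  have hbdd : BddAbove ((fun γ => ‖fderiv ℝ (fderiv ℝ g) (x + γ)‖) ''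
      Metric.closedBall (0:E) R) :=
    (isCompact_closedBall (0:E) R).bddAbove_image
      (by have := (hcont.comp (continuous_const.add continuous_id : Continuous fun γ : E => x + γ)); exact ((continuous_norm (E := E →L[ℝ] E →L[ℝ] ℝ)).comp this).continuousOn)
  have hKmem : ∀ γ : E, ‖γ‖ ≤ R → ‖fderiv ℝ (fderiv ℝ g) (x + γ)‖ ≤ Kc := by
    intro γ hγ
    exact le_csSup hbdd ⟨γ, by simpa [Metric.mem_closedBall, dist_zero_right] using hγ, rfl⟩
  have hK0 : 0 ≤ Kc := le_trans (norm_nonneg (fderiv ℝ (fderiv ℝ g) (x + 0))) (hKmem 0 (by simpa using hR.le))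
  -- 1D reduction
  set L : ℝ → E := fun s => x + s • δ with hL
  have hLd : ∀ s : ℝ, HasDerivAt L δ s := by
    intro s
    have : HasDerivAt (fun s : ℝ => s • δ) ((1:ℝ) • δ) s := (hasDerivAt_id s).smul_const δ
    simpa [hL] using this.const_add x
  set h : ℝ → ℝ := fun s => g (L s) with hh
  set h' : ℝ → ℝ := fun s => fderiv ℝ g (L s) δ with hh'
  set h'' : ℝ → ℝ := fun s => fderiv ℝ (fderiv ℝ g) (L s) δ δ with hh''
  have hd1 : ∀ s, HasDerivAt h (h' s) s := fun s =>
    (hgd (L s)).hasFDerivAt.comp_hasDerivAt s (hLd s)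
  have hd2 : ∀ s, HasDerivAt h' (h'' s) s := by
    intro s
    have hc : HasDerivAt (fun s => fderiv ℝ g (L s)) (fderiv ℝ (fderiv ℝ g) (L s) δ) s :=
      (hFd (L s)).hasFDerivAt.comp_hasDerivAt s (hLd s)
    have := (ContinuousLinearMap.apply ℝ ℝ δ).hasFDerivAt.comp_hasDerivAt s hc
    exact this
  have hCb : ∀ s ∈ Set.Icc (0:ℝ) 1, |h'' s| ≤ Kc * (‖δ‖ * ‖δ‖) := by
    intro s hs
    have hsδ : ‖s • δ‖ ≤ R := by
      rw [norm_smul, Real.norm_eq_abs, abs_of_nonneg hs.1]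
      calc s * ‖δ‖ ≤ 1 * ‖δ‖ := by
            apply mul_le_mul_of_nonneg_right hs.2 (norm_nonneg δ)
        _ ≤ R := by rw [one_mul]; exact hδR
    have h1 : |h'' s| ≤ ‖fderiv ℝ (fderiv ℝ g) (L s) δ‖ * ‖δ‖ :=
      (fderiv ℝ (fderiv ℝ g) (L s) δ).le_opNorm δ
    have h2 : ‖fderiv ℝ (fderiv ℝ g) (L s) δ‖ ≤ ‖fderiv ℝ (fderiv ℝ g) (L s)‖ * ‖δ‖ :=
      (fderiv ℝ (fderiv ℝ g) (L s)).le_opNorm δ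
    have h3 : ‖fderiv ℝ (fderiv ℝ g) (L s)‖ ≤ Kc := hKmem _ hsδ
    nlinarith [norm_nonneg δ, norm_nonneg (fderiv ℝ (fderiv ℝ g) (L s) δ)]
  have htay := taylor_lower_aux hd1 hd2 hCb
  have hL0 : L 0 = x := by simp [hL]
  have hL1 : L 1 = x + δ := by simp [hL]
  have hh0 : h 0 = g x := by rw [hh]; simp only []; rw [hL0]
  have hh1v : h 1 = g (x + δ) := by rw [hh]; simp only []; rw [hL1]
  have hh'0 : h' 0 = fderiv ℝ g x δ := by rw [hh']; simp only []; rw [hL0]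
  -- main chain
  have hgd1 : |fderiv ℝ g x δ| ≤ ‖fderiv ℝ g x‖ * ‖δ‖ := (fderiv ℝ g x).le_opNorm δ
  set D : ℝ := ‖fderiv ℝ g x‖ + R / 2 * Kc with hD
  have hchain : g x ≤ ‖δ‖ * D := by
    have h1 : g x + fderiv ℝ g x δ - Kc * (‖δ‖ * ‖δ‖) / 2 ≤ g (x + δ) := by
      rw [← hh0, ← hh'0, ← hh1v]; exact htay
    have h3 : Kc * (‖δ‖ * ‖δ‖) ≤ Kc * (R * ‖δ‖) := by
      apply mul_le_mul_of_nonneg_left _ hK0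
      exact mul_le_mul_of_nonneg_right hδR (norm_nonneg δ)
    rw [hD]
    nlinarith [(abs_le.mp hgd1).1]
  have hDpos : 0 < D := by
    by_contra hc
    push_neg at hc
    have : ‖δ‖ * D ≤ 0 := mul_nonpos_of_nonneg_of_nonpos (norm_nonneg δ) hc
    linarith
  rw [div_le_iff₀ hDpos]
  linarith [hchain]

/-- The multi-class Corollary: if class `t` is predicted at `x` and the prediction
changes at `x + δ`, then `‖δ‖ₚ ≥ sup_{R>0} min { R, min_{j ≠ t}
f⁽ʲ⁾(x) / (‖(f⁽ʲ⁾)′(x)‖ + (R/2)·K_R(f⁽ʲ⁾,x)) }` with `f⁽ʲ⁾ = f_t − f_j` and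
`K_R(g,x) = sup_{‖γ‖ₚ ≤ R} ‖g″(x+γ)‖`. -/
theorem multiclass_hessian_robustness
    (d K : ℕ) (hd : 1 ≤ d) (hK : 2 ≤ K) (p : ℝ≥0∞) [Fact (1 ≤ p)]
    (f : Fin K → PiLp p (fun _ : Fin d => ℝ) → ℝ)
    (hf : ∀ j, ContDiff ℝ 2 (f j))
    (x : PiLp p (fun _ : Fin d => ℝ)) (t : Fin K)
    (ht : ∀ j, j ≠ t → f j x < f t x)
    (δ : PiLp p (fun _ : Fin d => ℝ))
    (hδ : ∃ j, j ≠ t ∧ f t (x + δ) < f j (x + δ)) :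
    sSup {m : ℝ | ∃ R > (0 : ℝ), m = min R
      (sInf {b : ℝ | ∃ j, j ≠ t ∧
        b = (f t x - f j x) /
          (‖fderiv ℝ (fun y => f t y - f j y) x‖ +
           R / 2 * sSup ((fun γ =>
             ‖fderiv ℝ (fderiv ℝ (fun y => f t y - f j y)) (x + γ)‖) ''
             Metric.closedBall 0 R))})} ≤ ‖δ‖ := by
  obtain ⟨j₀, hj₀, hflip⟩ := hδ
  apply Real.sSup_le _ (norm_nonneg δ)
  rintro m ⟨R, hR, rfl⟩
  by_cases hcase : R ≤ ‖δ‖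
  · exact le_trans (min_le_left _ _) hcase
  · push_neg at hcase
    refine le_trans (min_le_right _ _) ?_
    set e : Fin K → ℝ := fun j =>
      (f t x - f j x) /
          (‖fderiv ℝ (fun y => f t y - f j y) x‖ +
           R / 2 * sSup ((fun γ =>
             ‖fderiv ℝ (fderiv ℝ (fun y => f t y - f j y)) (x + γ)‖) ''
             Metric.closedBall 0 R)) with he
    have hsub : {b : ℝ | ∃ j, j ≠ t ∧
        b = (f t x - f j x) /
          (‖fderiv ℝ (fun y => f t y - f j y) x‖ +
           R / 2 * sSup ((fun γ =>
             ‖fderiv ℝ (fderiv ℝ (fun y => f t y - f j y)) (x + γ)‖) ''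
             Metric.closedBall 0 R))} ⊆ Set.range e := by
      rintro b ⟨j, _, rfl⟩
      exact ⟨j, rfl⟩
    have hbdd : BddBelow {b : ℝ | ∃ j, j ≠ t ∧
        b = (f t x - f j x) /
          (‖fderiv ℝ (fun y => f t y - f j y) x‖ +
           R / 2 * sSup ((fun γ =>
             ‖fderiv ℝ (fderiv ℝ (fun y => f t y - f j y)) (x + γ)‖) ''
             Metric.closedBall 0 R))} :=
      ((Set.finite_range e).bddBelow).mono hsub
    refine le_trans (csInf_le hbdd ⟨j₀, hj₀, rfl⟩) ?_
    exact key_lemma (fun y => f t y - f j₀ y) ((hf t).sub (hf j₀)) x δ R hR hcase.le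
      (by simpa using sub_pos.mpr (ht j₀ hj₀)) (by simpa using sub_neg.mpr hflip)
end

section
/- Let p ∈ [1,∞], let E be ℝ^d equipped with the ℓ^p norm, let K ≥ 2, and let f : E → ℝ^K have twice continuously differentiable components f₁,…,f_K : E → ℝ. Fix x ∈ E and an index t such that f_t(x) > f_j(x) for all j ≠ t, let R > 0, and for j ≠ t set f^{(j)} := f_t − f_j. If δ ∈ E satisfies f_j(x+δ) ≥ f_t(x+δ) for some j ≠ t, then ‖δ‖_p ≥ min{ R, f^{(j)}(x) / ( ‖(f^{(j)})′(x)‖ + (R/2)·K_R(f^{(j)},x) ) } for that j, where K_R(g,x) := sup_{‖γ‖_p ≤ R} ‖g″(x+γ)‖. -/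
open scoped ENNReal

/-- Second-order Taylor bound: if `‖g''‖ ≤ M` on the segment from `x` to `x+δ`, then
`|g(x+δ) - g(x) - g'(x) δ| ≤ M/2 * ‖δ‖²`. -/
lemma taylor2_bound_aux {E : Type*} [NormedAddCommGroup E] [NormedSpace ℝ E]
    (g : E → ℝ) (hg : ContDiff ℝ 2 g) (x δ : E) (M : ℝ)
    (hM : ∀ y ∈ segment ℝ x (x + δ), ‖fderiv ℝ (fderiv ℝ g) y‖ ≤ M) :
    |g (x + δ) - g x - fderiv ℝ g x δ| ≤ M / 2 * ‖δ‖ ^ 2 := by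
  have hg1 : ContDiff ℝ 1 (fderiv ℝ g) := hg.fderiv_right (by norm_num)
  have hgdiff : Differentiable ℝ g := hg.differentiable two_ne_zero
  have hg'diff : Differentiable ℝ (fderiv ℝ g) := hg1.differentiable one_ne_zero
  have hg'cont : Continuous (fderiv ℝ g) := hg1.continuous
  have hmem : ∀ s : ℝ, s ∈ Set.Icc (0:ℝ) 1 → x + s • δ ∈ segment ℝ x (x + δ) := by
    intro s hs
    rw [segment_eq_image']
    exact ⟨s, hs, by simp⟩
  -- Lipschitz bound on derivative along the segment
  have hLip : ∀ s : ℝ, s ∈ Set.Icc (0:ℝ) 1 →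
      ‖fderiv ℝ g (x + s • δ) - fderiv ℝ g x‖ ≤ M * (s * ‖δ‖) := by
    intro s hs
    have := (convex_segment x (x + δ)).norm_image_sub_le_of_norm_fderiv_le
      (f := fderiv ℝ g) (C := M) (fun z _ => hg'diff z) (fun z hz => hM z hz)
      (left_mem_segment ℝ x (x + δ)) (hmem s hs)
    calc ‖fderiv ℝ g (x + s • δ) - fderiv ℝ g x‖ ≤ M * ‖(x + s • δ) - x‖ := this
      _ = M * (s * ‖δ‖) := by
          rw [add_sub_cancel_left, norm_smul, Real.norm_eq_abs, abs_of_nonneg hs.1]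
  set F : ℝ → ℝ := fun s => g (x + s • δ) - s * (fderiv ℝ g x δ) with hF
  set F' : ℝ → ℝ := fun s => fderiv ℝ g (x + s • δ) δ - fderiv ℝ g x δ with hF'
  have hcurve : ∀ s : ℝ, HasDerivAt (fun s : ℝ => x + s • δ) δ s := by
    intro s
    simpa using ((hasDerivAt_id s).smul_const δ).const_add x
  have hderiv : ∀ s : ℝ, HasDerivAt F (F' s) s := by
    intro s
    have h2 : HasDerivAt (fun s : ℝ => g (x + s • δ)) (fderiv ℝ g (x + s • δ) δ) s :=
      (hgdiff (x + s • δ)).hasFDerivAt.comp_hasDerivAt s (hcurve s)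
    have h3 : HasDerivAt (fun s : ℝ => s * (fderiv ℝ g x δ)) (fderiv ℝ g x δ) s := by
      simpa using (hasDerivAt_id s).mul_const (fderiv ℝ g x δ)
    exact h2.sub h3
  have hF'cont : Continuous F' := by
    have h1 : Continuous fun s : ℝ => fderiv ℝ g (x + s • δ) :=
      hg'cont.comp (by continuity)
    exact (h1.clm_apply continuous_const).sub continuous_const
  have hFTC : ∫ s in (0:ℝ)..1, F' s = F 1 - F 0 :=
    intervalIntegral.integral_eq_sub_of_hasDerivAt (fun s _ => hderiv s)
      (hF'cont.intervalIntegrable 0 1)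
  have hF10 : F 1 - F 0 = g (x + δ) - g x - fderiv ℝ g x δ := by
    simp [hF]; ring
  have hbound : |∫ s in (0:ℝ)..1, F' s| ≤ M / 2 * ‖δ‖ ^ 2 := by
    have habs : |∫ s in (0:ℝ)..1, F' s| ≤ ∫ s in (0:ℝ)..1, |F' s| :=
      intervalIntegral.abs_integral_le_integral_abs zero_le_one
    have hmono : ∫ s in (0:ℝ)..1, |F' s| ≤ ∫ s in (0:ℝ)..1, (M * ‖δ‖ ^ 2) * s := by
      apply intervalIntegral.integral_mono_on zero_le_one
        (hF'cont.abs.intervalIntegrable 0 1)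
        ((continuous_const.mul continuous_id).intervalIntegrable 0 1)
      intro s hs
      have : |F' s| ≤ ‖fderiv ℝ g (x + s • δ) - fderiv ℝ g x‖ * ‖δ‖ := by
        have := (fderiv ℝ g (x + s • δ) - fderiv ℝ g x).le_opNorm δ
        simpa [hF'] using this
      calc |F' s| ≤ ‖fderiv ℝ g (x + s • δ) - fderiv ℝ g x‖ * ‖δ‖ := this
        _ ≤ (M * (s * ‖δ‖)) * ‖δ‖ :=
            mul_le_mul_of_nonneg_right (hLip s hs) (norm_nonneg δ)
        _ = (M * ‖δ‖ ^ 2) * s := by ring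
    have hcomp : ∫ s in (0:ℝ)..1, (M * ‖δ‖ ^ 2) * s = M / 2 * ‖δ‖ ^ 2 := by
      rw [intervalIntegral.integral_const_mul, integral_id]
      ring
    calc |∫ s in (0:ℝ)..1, F' s| ≤ ∫ s in (0:ℝ)..1, |F' s| := habs
      _ ≤ ∫ s in (0:ℝ)..1, (M * ‖δ‖ ^ 2) * s := hmono
      _ = M / 2 * ‖δ‖ ^ 2 := hcomp
  rw [hFTC, hF10] at hbound
  exact hbound

/-- Per-class, fixed-`R` step of the multi-class Corollary: if class `t` is
predicted at `x` and `f j (x+δ) ≥ f t (x+δ)` for some `j ≠ t`, then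
`‖δ‖ₚ ≥ min { R, f⁽ʲ⁾(x) / (‖(f⁽ʲ⁾)′(x)‖ + (R/2)·K_R(f⁽ʲ⁾,x)) }` for that `j`. -/
theorem multiclass_hessian_robustness_fixedR
    (d K : ℕ) (hd : 1 ≤ d) (hK : 2 ≤ K) (p : ℝ≥0∞) [Fact (1 ≤ p)]
    (f : Fin K → PiLp p (fun _ : Fin d => ℝ) → ℝ)
    (hf : ∀ j, ContDiff ℝ 2 (f j))
    (x : PiLp p (fun _ : Fin d => ℝ)) (t : Fin K)
    (ht : ∀ j, j ≠ t → f j x < f t x)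
    (R : ℝ) (hR : 0 < R)
    (δ : PiLp p (fun _ : Fin d => ℝ))
    (j : Fin K) (hj : j ≠ t) (hδ : f t (x + δ) ≤ f j (x + δ)) :
    min R ((f t x - f j x) /
      (‖fderiv ℝ (fun y => f t y - f j y) x‖ +
       R / 2 * sSup ((fun γ =>
         ‖fderiv ℝ (fderiv ℝ (fun y => f t y - f j y)) (x + γ)‖) ''
         Metric.closedBall 0 R))) ≤ ‖δ‖ := by
  set g : PiLp p (fun _ : Fin d => ℝ) → ℝ := fun y => f t y - f j y with hgdef
  have hg : ContDiff ℝ 2 g := (hf t).sub (hf j)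
  set M : ℝ := sSup ((fun γ => ‖fderiv ℝ (fderiv ℝ g) (x + γ)‖) ''
    Metric.closedBall 0 R) with hMdef
  have hg''cont : Continuous (fderiv ℝ (fderiv ℝ g)) :=
    (hg.fderiv_right (m := 1) (by norm_num)).continuous_fderiv one_ne_zero
  have hcont : Continuous fun γ : PiLp p (fun _ : Fin d => ℝ) =>
      ‖fderiv ℝ (fderiv ℝ g) (x + γ)‖ :=
    (hg''cont.comp (continuous_const.add continuous_id)).norm (E := PiLp p (fun _ : Fin d => ℝ) →L[ℝ] PiLp p (fun _ : Fin d => ℝ) →L[ℝ] ℝ)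
  have hbdd : BddAbove ((fun γ => ‖fderiv ℝ (fderiv ℝ g) (x + γ)‖) ''
      Metric.closedBall 0 R) :=
    ((isCompact_closedBall _ _).image hcont).bddAbove
  have hMle : ∀ γ ∈ Metric.closedBall (0 : PiLp p (fun _ : Fin d => ℝ)) R,
      ‖fderiv ℝ (fderiv ℝ g) (x + γ)‖ ≤ M :=
    fun γ hγ => le_csSup hbdd ⟨γ, hγ, rfl⟩
  have hM0 : 0 ≤ M :=
    le_trans (norm_nonneg (fderiv ℝ (fderiv ℝ g) x)) (by simpa using hMle 0 (by simp [hR.le]))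
  by_cases hcase : R ≤ ‖δ‖
  · exact le_trans (min_le_left _ _) hcase
  push_neg at hcase
  have hδR : ‖δ‖ ≤ R := hcase.le
  have hseg : ∀ y ∈ segment ℝ x (x + δ), ‖fderiv ℝ (fderiv ℝ g) y‖ ≤ M := by
    intro y hy
    rw [segment_eq_image'] at hy
    obtain ⟨s, hs, rfl⟩ := hy
    have h1 : x + s • (x + δ - x) = x + s • δ := by simp
    have hball : s • δ ∈ Metric.closedBall (0 : PiLp p (fun _ : Fin d => ℝ)) R := by
      rw [Metric.mem_closedBall, dist_zero_right, norm_smul, Real.norm_eq_abs,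
        abs_of_nonneg hs.1]
      calc s * ‖δ‖ ≤ 1 * R := mul_le_mul hs.2 hδR (norm_nonneg δ) zero_le_one
        _ = R := one_mul R
    simpa [h1] using hMle (s • δ) hball
  have htb := taylor2_bound_aux g hg x δ M hseg
  have hgx : 0 < g x := sub_pos.2 (ht j hj)
  have hgxδ : g (x + δ) ≤ 0 := sub_nonpos.2 hδ
  have hopn : |fderiv ℝ g x δ| ≤ ‖fderiv ℝ g x‖ * ‖δ‖ := (fderiv ℝ g x).le_opNorm δ
  have hkey : g x ≤ (‖fderiv ℝ g x‖ + R / 2 * M) * ‖δ‖ := by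
    have hA := (abs_le.1 htb).1
    have hB := (abs_le.1 hopn).1
    nlinarith [mul_nonneg (mul_nonneg hM0 (norm_nonneg δ)) (sub_nonneg.2 hδR), norm_nonneg δ]
  apply min_le_of_right_le
  have hD0 : 0 ≤ ‖fderiv ℝ g x‖ + R / 2 * M :=
    add_nonneg (norm_nonneg _) (mul_nonneg (by positivity) hM0)
  rcases hD0.eq_or_lt with h | h
  · rw [← h, div_zero]; exact norm_nonneg δ
  · rw [div_le_iff₀ h]
    calc g x ≤ (‖fderiv ℝ g x‖ + R / 2 * M) * ‖δ‖ := hkey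
      _ = ‖δ‖ * (‖fderiv ℝ g x‖ + R / 2 * M) := mul_comm _ _
end

section
/- Let p ∈ [1,∞], let E be ℝ^d equipped with the ℓ^p norm, let f : E → ℝ be twice continuously differentiable, let x ∈ E with f(x) > 0, and let R > 0. If δ ∈ E satisfies ‖δ‖_p < min{ R, f(x) / ( ‖f′(x)‖ + (R/2) · K_R(f,x) ) }, then f(x+δ) > 0, where ‖f′(x)‖ is the operator norm of the Fréchet derivative of f at x and K_R(f,x) := sup_{‖γ‖_p ≤ R} ‖f″(x+γ)‖. -/
open scoped ENNReal

set_option maxHeartbeats 1000000 in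
/-- Robustness-certificate form of Theorem 2: if `f x > 0` and
`‖δ‖ₚ < min { R, f x / (‖f′(x)‖ + (R/2)·K_R(f,x)) }`, then `f (x+δ) > 0`. -/
theorem hessian_robustness_certificate
    (d : ℕ) (hd : 1 ≤ d) (p : ℝ≥0∞) [Fact (1 ≤ p)]
    (f : PiLp p (fun _ : Fin d => ℝ) → ℝ) (hf : ContDiff ℝ 2 f)
    (x : PiLp p (fun _ : Fin d => ℝ)) (hx : 0 < f x)
    (R : ℝ) (hR : 0 < R)
    (δ : PiLp p (fun _ : Fin d => ℝ))
    (hδ : ‖δ‖ < min R (f x / (‖fderiv ℝ f x‖ +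
      R / 2 * sSup ((fun γ => ‖fderiv ℝ (fderiv ℝ f) (x + γ)‖) ''
        Metric.closedBall 0 R)))) :
    0 < f (x + δ) := by
  set F := fderiv ℝ f with hF
  set G := fderiv ℝ F with hG
  set K := sSup ((fun γ => ‖G (x + γ)‖) '' Metric.closedBall 0 R) with hK
  have hδR : ‖δ‖ < R := lt_of_lt_of_le hδ (min_le_left _ _)
  have hfd : Differentiable ℝ f := hf.differentiable (by norm_num)
  have hF1 : ContDiff ℝ 1 F := hf.fderiv_right (by norm_num)
  have hFd : Differentiable ℝ F := hF1.differentiable (by norm_num)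
  have hGcont : Continuous G := (hF1.fderiv_right (m := 0) (by norm_num)).continuous
  -- bounds on K
  have hbdd : BddAbove ((fun γ => ‖G (x + γ)‖) '' Metric.closedBall 0 R) :=
    (isCompact_closedBall (0 : PiLp p (fun _ : Fin d => ℝ)) R).bddAbove_image
      (by have hc : Continuous (fun γ : PiLp p (fun _ : Fin d => ℝ) => G (x + γ)) := hGcont.comp (continuous_const.add continuous_id); exact (Continuous.norm (E := (PiLp p (fun _ : Fin d => ℝ)) →L[ℝ] (PiLp p (fun _ : Fin d => ℝ)) →L[ℝ] ℝ) hc).continuousOn)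
  have hKle : ∀ γ : PiLp p (fun _ : Fin d => ℝ), ‖γ‖ ≤ R → ‖G (x + γ)‖ ≤ K := fun γ h =>
    le_csSup hbdd ⟨γ, by simpa [Metric.mem_closedBall, dist_zero_right] using h, rfl⟩
  have hK0 : 0 ≤ K := le_trans (norm_nonneg (G (x + 0))) (hKle 0 (by simpa using hR.le))
  -- Lipschitz bound for F on the closed ball of radius R around x
  have hlip : ∀ y ∈ Metric.closedBall x R, ‖F y - F x‖ ≤ K * ‖y - x‖ := by
    intro y hy
    refine (convex_closedBall x R).norm_image_sub_le_of_norm_fderiv_le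
      (fun z _ => hFd z) (fun z hz => ?_) (Metric.mem_closedBall_self hR.le) hy
    have := hKle (z - x) (by simpa [dist_eq_norm] using hz)
    simpa using this
  -- derivative of t ↦ f (x + t • δ)
  have hg : ∀ t : ℝ, HasDerivAt (fun t : ℝ => f (x + t • δ)) (F (x + t • δ) δ) t := by
    intro t
    have h1 : HasDerivAt (fun t : ℝ => x + t • δ) δ t := by
      simpa using ((hasDerivAt_id t).smul_const δ).const_add x
    exact ((hfd (x + t • δ)).hasFDerivAt.comp_hasDerivAt t h1)
  set a : ℝ := ‖F x‖ * ‖δ‖ with ha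
  set b : ℝ := K * ‖δ‖ ^ 2 with hb
  have ha0 : 0 ≤ a := by positivity
  have hb0 : 0 ≤ b := by positivity
  -- auxiliary function with nonnegative derivative on [0,1]
  set φ : ℝ → ℝ := fun t => f (x + t • δ) + a * t + b * t ^ 2 / 2 with hφ
  have hφd : ∀ t : ℝ, HasDerivAt φ (F (x + t • δ) δ + a + b * t) t := by
    intro t
    have h2 : HasDerivAt (fun t : ℝ => a * t) a t := by
      simpa using (hasDerivAt_id t).const_mul a
    have h3 : HasDerivAt (fun t : ℝ => b * t ^ 2 / 2) (b * t) t := by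
      have := ((hasDerivAt_pow 2 t).const_mul b).div_const 2
      simpa using this.congr_deriv (by ring)
    exact ((hg t).add h2).add h3
  have hmono : MonotoneOn φ (Set.Icc (0 : ℝ) 1) := by
    apply monotoneOn_of_deriv_nonneg (convex_Icc 0 1)
    · exact fun t _ => ((hφd t).continuousAt.continuousWithinAt)
    · exact fun t _ => ((hφd t).differentiableAt.differentiableWithinAt)
    · intro t ht
      rw [interior_Icc] at ht
      rw [(hφd t).deriv]
      have ht0 : (0 : ℝ) ≤ t := ht.1.le
      have ht1 : t ≤ 1 := ht.2.le
      have hmem : x + t • δ ∈ Metric.closedBall x R := by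
        simp only [Metric.mem_closedBall, dist_eq_norm, add_sub_cancel_left, norm_smul,
          Real.norm_eq_abs, abs_of_nonneg ht0]
        nlinarith [norm_nonneg δ]
      have hFnorm : ‖F (x + t • δ)‖ ≤ ‖F x‖ + K * (t * ‖δ‖) := by
        have h1 := hlip (x + t • δ) hmem
        have h2 : ‖F (x + t • δ)‖ - ‖F x‖ ≤ ‖F (x + t • δ) - F x‖ :=
          norm_sub_norm_le _ _
        have h3 : ‖x + t • δ - x‖ = t * ‖δ‖ := by
          simp [norm_smul, Real.norm_eq_abs, abs_of_nonneg ht0]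
        rw [h3] at h1
        linarith
      have hval : |F (x + t • δ) δ| ≤ (‖F x‖ + K * (t * ‖δ‖)) * ‖δ‖ := by
        calc |F (x + t • δ) δ| ≤ ‖F (x + t • δ)‖ * ‖δ‖ :=
              (F (x + t • δ)).le_opNorm δ
          _ ≤ (‖F x‖ + K * (t * ‖δ‖)) * ‖δ‖ :=
              mul_le_mul_of_nonneg_right hFnorm (norm_nonneg δ)
      have := neg_abs_le (F (x + t • δ) δ)
      have hexp : (‖F x‖ + K * (t * ‖δ‖)) * ‖δ‖ = a + b * t := by
        rw [ha, hb]; ring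
      linarith [hexp ▸ hval, neg_abs_le (F (x + t • δ) δ)]
  have hmono01 : φ 0 ≤ φ 1 :=
    hmono (Set.left_mem_Icc.2 zero_le_one) (Set.right_mem_Icc.2 zero_le_one) zero_le_one
  have hkey : f x - a - b / 2 ≤ f (x + δ) := by
    have h0 : φ 0 = f x := by simp [hφ]
    have h1 : φ 1 = f (x + δ) + a + b / 2 := by simp [hφ]
    rw [h0, h1] at hmono01
    linarith
  -- conclude
  set D : ℝ := ‖F x‖ + R / 2 * K with hD
  have hD0 : 0 ≤ D := by positivity
  rcases eq_or_lt_of_le hD0 with hDeq | hDpos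
  · exfalso
    have : f x / D = f x / 0 := by rw [← hDeq]
    rw [this, div_zero] at hδ
    have := lt_of_lt_of_le hδ (min_le_right _ _)
    linarith [norm_nonneg δ]
  · have hδD : ‖δ‖ * D < f x := by
      have h1 : ‖δ‖ < f x / D := lt_of_lt_of_le hδ (min_le_right _ _)
      exact (lt_div_iff₀ hDpos).mp h1
    have hab : a + b / 2 ≤ ‖δ‖ * D := by
      rw [ha, hb, hD]
      have h5 : K * ‖δ‖ * ‖δ‖ ≤ K * ‖δ‖ * R :=
        mul_le_mul_of_nonneg_left hδR.le (mul_nonneg hK0 (norm_nonneg δ))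
      nlinarith [h5]
    have h6 : a + b / 2 < f x := lt_of_le_of_lt hab hδD
    linarith [hkey, h6]
end

section
/- Let p ∈ [1,∞], let E be ℝ^d equipped with the ℓ^p norm, let f : E → ℝ be continuously differentiable, let x ∈ E with f(x) > 0, and let R > 0 with G_R := sup_{‖γ‖_p ≤ R} ‖f′(x+γ)‖ > 0. If δ ∈ E satisfies ‖δ‖_p < min{ R, f(x) / G_R }, then f(x+δ) > 0, where ‖f′(y)‖ denotes the operator norm of the Fréchet derivative of f at y. -/
open scoped ENNReal

/-- Robustness-certificate form of Theorem 1 (Hein–Andriushchenko): if `f x > 0`,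
`G_R := sup_{‖γ‖ₚ ≤ R} ‖f′(x+γ)‖ > 0`, and `‖δ‖ₚ < min { R, f x / G_R }`, then
`f (x+δ) > 0`. -/
theorem gradient_robustness_certificate
    (d : ℕ) (hd : 1 ≤ d) (p : ℝ≥0∞) [Fact (1 ≤ p)]
    (f : PiLp p (fun _ : Fin d => ℝ) → ℝ) (hf : ContDiff ℝ 1 f)
    (x : PiLp p (fun _ : Fin d => ℝ)) (hx : 0 < f x)
    (R : ℝ) (hR : 0 < R)
    (hG : 0 < sSup ((fun γ => ‖fderiv ℝ f (x + γ)‖) '' Metric.closedBall 0 R))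
    (δ : PiLp p (fun _ : Fin d => ℝ))
    (hδ : ‖δ‖ < min R (f x /
      sSup ((fun γ => ‖fderiv ℝ f (x + γ)‖) '' Metric.closedBall 0 R))) :
    0 < f (x + δ) := by
  set G := sSup ((fun γ => ‖fderiv ℝ f (x + γ)‖) '' Metric.closedBall 0 R) with hGdef
  have hδR : ‖δ‖ < R := lt_of_lt_of_le hδ (min_le_left _ _)
  have hδG : ‖δ‖ < f x / G := lt_of_lt_of_le hδ (min_le_right _ _)
  have hcont : Continuous fun γ => ‖fderiv ℝ f (x + γ)‖ :=
    ((hf.continuous_fderiv one_ne_zero).comp (continuous_const.add continuous_id)).norm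
  have hbdd : BddAbove ((fun γ => ‖fderiv ℝ f (x + γ)‖) '' Metric.closedBall 0 R) :=
    ((isCompact_closedBall (0 : PiLp p (fun _ : Fin d => ℝ)) R).image hcont).bddAbove
  have hbound : ∀ y ∈ Metric.closedBall x ‖δ‖, ‖fderiv ℝ f y‖ ≤ G := by
    intro y hy
    have hmem : y - x ∈ Metric.closedBall (0 : PiLp p (fun _ : Fin d => ℝ)) R := by
      rw [Metric.mem_closedBall, dist_zero_right]
      calc ‖y - x‖ ≤ ‖δ‖ := by
            rw [Metric.mem_closedBall, dist_eq_norm] at hy; exact hy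
        _ ≤ R := hδR.le
    have : ‖fderiv ℝ f (x + (y - x))‖ ≤ G :=
      le_csSup hbdd (Set.mem_image_of_mem _ hmem)
    simpa using this
  have hdiff : ∀ y ∈ Metric.closedBall x ‖δ‖, DifferentiableAt ℝ f y :=
    fun y _ => (hf.differentiable one_ne_zero) y
  have hymem : x + δ ∈ Metric.closedBall x ‖δ‖ := by
    simp [Metric.mem_closedBall, dist_eq_norm]
  have key := (convex_closedBall x ‖δ‖).norm_image_sub_le_of_norm_fderiv_le
    hdiff hbound (Metric.mem_closedBall_self (norm_nonneg δ)) hymem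
  have h1 : ‖f (x + δ) - f x‖ ≤ G * ‖δ‖ := by simpa using key
  have h2 : G * ‖δ‖ < f x := by
    have := (lt_div_iff₀ hG).mp hδG
    linarith
  have := abs_le.mp (by rwa [Real.norm_eq_abs] at h1)
  linarith [this.1]
end

section
/- Let V be a compact topological space, let D be a finite-dimensional real normed vector space, and let g : D × V → ℝ be continuous. Suppose that for every v ∈ V the map θ ↦ g(θ, v) is differentiable, with Fréchet derivative D_θ g(θ, v) ∈ D →L[ℝ] ℝ depending continuously on (θ, v) jointly. Define φ : D → ℝ by φ(θ) = sup_{v ∈ V} g(θ, v). If at a point θ₀ ∈ D the supremum is attained at a unique v* ∈ V (i.e., g(θ₀, v*) = φ(θ₀) and g(θ₀, v) < φ(θ₀) for all v ≠ v*), then φ is differentiable at θ₀ with Fréchet derivative D_θ g(θ₀, v*). -/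
open Filter Asymptotics Metric Set Topology


/-- Danskin's theorem (instance used by the paper): if `g : D × V → ℝ` is continuous
on a compact `V`, `θ ↦ g (θ, v)` is differentiable with derivative `Dg (θ, v)`
depending continuously on `(θ, v)`, and at `θ₀` the supremum `φ θ = ⨆ v, g (θ, v)`
is attained at a unique `v*`, then `φ` is differentiable at `θ₀` with derivative
`Dg (θ₀, v*)`. -/
theorem danskin_unique_maximizer
    {V : Type*} [TopologicalSpace V] [CompactSpace V]
    {D : Type*} [NormedAddCommGroup D] [NormedSpace ℝ D] [FiniteDimensional ℝ D]
    (g : D × V → ℝ) (hg : Continuous g)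
    (Dg : D × V → D →L[ℝ] ℝ)
    (hDg : ∀ (θ : D) (v : V), HasFDerivAt (fun θ' => g (θ', v)) (Dg (θ, v)) θ)
    (hDgc : Continuous Dg)
    (θ₀ : D) (vstar : V)
    (hmax : g (θ₀, vstar) = ⨆ v, g (θ₀, v))
    (huniq : ∀ v, v ≠ vstar → g (θ₀, v) < ⨆ v', g (θ₀, v')) :
    HasFDerivAt (fun θ => ⨆ v, g (θ, v)) (Dg (θ₀, vstar)) θ₀ := by
  have hne : Nonempty V := ⟨vstar⟩
  set L := Dg (θ₀, vstar) with hLdef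
  have bdd : ∀ θ : D, BddAbove (Set.range fun v => g (θ, v)) := fun θ =>
    (isCompact_range (hg.comp (Continuous.prodMk_right θ))).bddAbove
  have hle : ∀ (θ : D) (v : V), g (θ, v) ≤ ⨆ v', g (θ, v') := fun θ v => le_ciSup (bdd θ) v
  have hmaxex : ∀ θ : D, ∃ w : V, (⨆ v, g (θ, v)) = g (θ, w) ∧ ∀ v, g (θ, v) ≤ g (θ, w) := by
    intro θ
    obtain ⟨w, -, hw⟩ := isCompact_univ.exists_isMaxOn univ_nonempty
      (hg.comp (Continuous.prodMk_right θ)).continuousOn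
    exact ⟨w, le_antisymm (ciSup_le fun v => hw (mem_univ v)) (hle θ w),
      fun v => hw (mem_univ v)⟩
  rw [hasFDerivAt_iff_isLittleO, isLittleO_iff]
  intro ε hε
  -- neighborhood where derivative is ε-close to L
  have hP : {p : D × V | ‖Dg p - L‖ < ε} ∈ 𝓝 (θ₀, vstar) := by
    have hc : ContinuousAt (fun p => ‖Dg p - L‖) (θ₀, vstar) :=
      ((hDgc.sub continuous_const).norm).continuousAt
    have : Iio ε ∈ 𝓝 ‖Dg (θ₀, vstar) - L‖ := by
      apply Iio_mem_nhds; simp [hLdef, hε]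
    exact hc.preimage_mem_nhds this
  obtain ⟨U₁, W, hU₁o, hθ₀U₁, hWo, hvW, hUW⟩ := mem_nhds_prod_iff'.mp hP
  obtain ⟨r, hr, hrball⟩ := Metric.mem_nhds_iff.mp (hU₁o.mem_nhds hθ₀U₁)
  -- eventually, every maximizer of g (θ, ·) lies in W
  have hev2 : ∀ᶠ θ in 𝓝 θ₀, ∀ v : V, (∀ v', g (θ, v') ≤ g (θ, v)) → v ∈ W := by
    by_cases hKne : (Wᶜ : Set V).Nonempty
    · have hKcl : IsClosed (Wᶜ : Set V) := hWo.isClosed_compl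
      have hKcp : IsCompact (Wᶜ : Set V) := hKcl.isCompact
      obtain ⟨v₁, hv₁K, hv₁max⟩ := hKcp.exists_isMaxOn hKne
        (hg.comp (Continuous.prodMk_right θ₀)).continuousOn
      have hv₁ne : v₁ ≠ vstar := fun h => hv₁K (by rw [h]; exact hvW)
      have hclt : g (θ₀, v₁) < ⨆ v, g (θ₀, v) := huniq v₁ hv₁ne
      set m := (g (θ₀, v₁) + ⨆ v, g (θ₀, v)) / 2 with hm
      have hcm : g (θ₀, v₁) < m := by rw [hm]; linarith
      have hmlt : m < ⨆ v, g (θ₀, v) := by rw [hm]; linarith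
      have hOopen : IsOpen {p : D × V | g p < m} := isOpen_lt hg continuous_const
      have htube : ({θ₀} : Set D) ×ˢ (Wᶜ : Set V) ⊆ {p : D × V | g p < m} := by
        rintro ⟨a, b⟩ ⟨ha, hb⟩
        simp only [mem_singleton_iff] at ha
        subst ha
        exact lt_of_le_of_lt (hv₁max hb) hcm
      obtain ⟨U₂, V₂, hU₂o, hV₂o, hθ₀U₂, hKV₂, hsub⟩ :=
        generalized_tube_lemma isCompact_singleton hKcp hOopen htube
      have hg2 : ∀ᶠ θ in 𝓝 θ₀, m < g (θ, vstar) := by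
        have hc : ContinuousAt (fun θ => g (θ, vstar)) θ₀ :=
          (hg.comp (continuous_id.prodMk continuous_const)).continuousAt
        have : Ioi m ∈ 𝓝 (g (θ₀, vstar)) := Ioi_mem_nhds (by rw [hmax]; exact hmlt)
        exact hc.preimage_mem_nhds this
      filter_upwards [hU₂o.mem_nhds (hθ₀U₂ rfl), hg2] with θ hθU₂ hθg
      intro v hvmax
      by_contra hvWc
      have h1 : g (θ, v) < m := hsub ⟨hθU₂, hKV₂ hvWc⟩
      exact absurd (hvmax vstar) (not_le.mpr (lt_trans h1 hθg))
    · filter_upwards with θ v _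
      by_contra h
      exact hKne ⟨v, h⟩
  -- lower bound eventually
  have hevlow : ∀ᶠ θ in 𝓝 θ₀,
      ‖g (θ, vstar) - g (θ₀, vstar) - L (θ - θ₀)‖ ≤ ε * ‖θ - θ₀‖ := by
    have := (hDg θ₀ vstar).isLittleO
    exact isLittleO_iff.mp this hε
  filter_upwards [ball_mem_nhds θ₀ hr, hev2, hevlow] with θ hball hmem hlow
  rw [Real.norm_eq_abs, abs_le]
  have hlow1 := (abs_le.mp (by rwa [Real.norm_eq_abs] at hlow)).1
  have hlow2 := (abs_le.mp (by rwa [Real.norm_eq_abs] at hlow)).2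
  constructor
  · -- lower bound
    have h1 : g (θ, vstar) ≤ ⨆ v, g (θ, v) := hle θ vstar
    have h2 : (⨆ v, g (θ₀, v)) = g (θ₀, vstar) := hmax.symm
    linarith
  · -- upper bound
    obtain ⟨w, hφw, hwmax⟩ := hmaxex θ
    have hwW : w ∈ W := hmem w hwmax
    have hmvt : ‖(g (θ, w) - L θ) - (g (θ₀, w) - L θ₀)‖ ≤ ε * ‖θ - θ₀‖ := by
      refine Convex.norm_image_sub_le_of_norm_hasFDerivWithin_le
        (f := fun θ' => g (θ', w) - L θ') (f' := fun θ' => Dg (θ', w) - L)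
        (fun x hx => ((hDg x w).sub L.hasFDerivAt).hasFDerivWithinAt)
        (fun x hx => le_of_lt (hUW ⟨hrball hx, hwW⟩))
        (convex_ball θ₀ r) (mem_ball_self hr) hball
    have habs := (abs_le.mp (by rwa [Real.norm_eq_abs] at hmvt)).2
    have hLsub : L θ - L θ₀ = L (θ - θ₀) := (map_sub L θ θ₀).symm
    have h3 : g (θ₀, w) ≤ ⨆ v, g (θ₀, v) := hle θ₀ w
    have h4 : (⨆ v, g (θ, v)) = g (θ, w) := hφw
    linarith
end
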